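/- arXiv:1301.4706 — 2 statements merged into one kernel-verified Lean document; each statement's English description precedes it below -/
import Mathlib

section
/- (Matrix instance of Lemma 2.6.) Let a, b ∈ M_n(ℂ) with b Hermitian, and let θ ∈ (0,1). Then for every k with 0 ≤ k ≤ n, the sum of the k largest singular values of exp(θ·b) · a · exp((1-θ)·b) is at most Σ_{i<k} max(σ_i(a·exp(b)), σ_i(exp(b)·a)), where σ_i(X) denotes the i-th largest singular value of X. -/
open scoped BigOperators ComplexOrder

/-- The singular values of a square complex matrix, i.e. the eigenvalues of
`(Aᴴ * A)^(1/2)`, arranged in decreasing order: `singularValues A 0` is the largest. -/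
noncomputable def singularValues {m : ℕ} (A : Matrix (Fin m) (Fin m) ℂ) : Fin m → ℝ :=
  fun i =>
    Real.sqrt
      (((Matrix.isHermitian_conjTranspose_mul_self A).eigenvalues ∘
        Tuple.sort (Matrix.isHermitian_conjTranspose_mul_self A).eigenvalues) i.rev)

namespace KyFanAux
open Matrix

variable {n : ℕ}

local notation "E" => EuclideanSpace ℂ (Fin n)
local notation "⟪" x ", " y "⟫" => inner (𝕜 := ℂ) x y

/-- coerce a plain vector into Euclidean space -/
noncomputable def toE (v : Fin n → ℂ) : EuclideanSpace ℂ (Fin n) := (WithLp.equiv 2 _).symm v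

lemma inner_toE (x y : Fin n → ℂ) : ⟪toE x, toE y⟫ = dotProduct (star x) y := by
  rw [EuclideanSpace.inner_eq_star_dotProduct, dotProduct_comm]; rfl

lemma ofLp_toE (w : Fin n → ℂ) : ⇑(toE w) = w := rfl

variable (A : Matrix (Fin n) (Fin n) ℂ)

/-- permutation sending `i` to the position of the `i`-th largest eigenvalue of `AᴴA`. -/
noncomputable def sperm : Equiv.Perm (Fin n) :=
  Fin.revPerm.trans (Tuple.sort (Matrix.isHermitian_conjTranspose_mul_self A).eigenvalues)

lemma singularValues_eq (i : Fin n) :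
    singularValues A i =
      Real.sqrt ((Matrix.isHermitian_conjTranspose_mul_self A).eigenvalues (sperm A i)) := rfl

lemma sv_nonneg (i : Fin n) : 0 ≤ singularValues A i := Real.sqrt_nonneg _

lemma sq_sv (i : Fin n) :
    singularValues A i ^ 2 =
      (Matrix.isHermitian_conjTranspose_mul_self A).eigenvalues (sperm A i) :=
  Real.sq_sqrt ((Matrix.posSemidef_conjTranspose_mul_self A).eigenvalues_nonneg _)

lemma sv_antitone : Antitone (singularValues A) := by
  intro i j hij
  rw [singularValues_eq, singularValues_eq]
  apply Real.sqrt_le_sqrt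
  have := Tuple.monotone_sort (Matrix.isHermitian_conjTranspose_mul_self A).eigenvalues
    (Fin.rev_le_rev.mpr hij)
  simpa [sperm] using this

/-- Orthonormal basis of right singular vectors (sorted). -/
noncomputable def rbasis : OrthonormalBasis (Fin n) ℂ (EuclideanSpace ℂ (Fin n)) :=
  ((Matrix.isHermitian_conjTranspose_mul_self A).eigenvectorBasis).reindex (sperm A).symm

lemma rbasis_apply (i : Fin n) :
    rbasis A i = (Matrix.isHermitian_conjTranspose_mul_self A).eigenvectorBasis (sperm A i) := by
  simp [rbasis]

lemma mulVec_AhA_rbasis (i : Fin n) :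
    (Aᴴ * A) *ᵥ ⇑(rbasis A i) = (singularValues A i ^ 2 : ℝ) • ⇑(rbasis A i) := by
  rw [rbasis_apply, sq_sv]
  exact (Matrix.isHermitian_conjTranspose_mul_self A).mulVec_eigenvectorBasis _


lemma inner_mulVec_adj (x y : Fin n → ℂ) :
    ⟪toE (A *ᵥ x), toE (A *ᵥ y)⟫ = ⟪toE x, toE ((Aᴴ * A) *ᵥ y)⟫ := by
  rw [inner_toE, inner_toE]
  simp [Matrix.star_mulVec, Matrix.dotProduct_mulVec, Matrix.vecMul_vecMul]

lemma inner_mulVec_rbasis (i j : Fin n) :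
    ⟪toE (A *ᵥ ⇑(rbasis A i)), toE (A *ᵥ ⇑(rbasis A j))⟫ =
      if i = j then ((singularValues A j : ℝ) ^ 2 : ℂ) else 0 := by
  rw [inner_mulVec_adj, mulVec_AhA_rbasis]
  have horth := (rbasis A).orthonormal
  rw [orthonormal_iff_ite] at horth
  have : toE ((singularValues A j ^ 2 : ℝ) • ⇑(rbasis A j)) =
      ((singularValues A j ^ 2 : ℝ) : ℂ) • (rbasis A j) := by
    ext p
    simp [toE, Complex.real_smul]
  rw [this]
  have htoE : toE ⇑(rbasis A i) = rbasis A i := rfl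
  rw [htoE, inner_smul_right, horth i j]
  split <;> simp

/-- Left singular vectors: `A rᵢ` normalized (or `0` if the singular value vanishes). -/
noncomputable def lvec (i : Fin n) : EuclideanSpace ℂ (Fin n) :=
  if singularValues A i = 0 then 0
  else ((singularValues A i : ℂ))⁻¹ • toE (A *ᵥ ⇑(rbasis A i))

lemma mulVec_rbasis_eq (i : Fin n) :
    toE (A *ᵥ ⇑(rbasis A i)) = ((singularValues A i : ℂ)) • lvec A i := by
  rw [lvec]
  split_ifs with h
  · have h0 : ⟪toE (A *ᵥ ⇑(rbasis A i)), toE (A *ᵥ ⇑(rbasis A i))⟫ = 0 := by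
      rw [inner_mulVec_rbasis]; simp [h]
    rw [inner_self_eq_zero] at h0
    simp [h0]
  · rw [smul_smul]
    rw [mul_inv_cancel₀ (by exact_mod_cast h), one_smul]

lemma inner_lvec (i j : Fin n) :
    ⟪lvec A i, lvec A j⟫ =
      if i = j ∧ singularValues A i ≠ 0 then 1 else 0 := by
  by_cases hij : i = j
  · subst hij
    by_cases h : singularValues A i = 0
    · simp [lvec, h]
    · rw [lvec, if_neg h, inner_smul_left, inner_smul_right, inner_mulVec_rbasis, if_pos rfl,
        map_inv₀, Complex.conj_ofReal, if_pos ⟨rfl, h⟩]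
      have hc : (singularValues A i : ℂ) ≠ 0 := by exact_mod_cast h
      rw [← Complex.ofReal_pow]
      field_simp
      norm_cast
  · have h0 : ⟪toE (A *ᵥ ⇑(rbasis A i)), toE (A *ᵥ ⇑(rbasis A j))⟫ = 0 := by
      rw [inner_mulVec_rbasis, if_neg hij]
    rw [if_neg (fun hc => hij hc.1), lvec, lvec]
    split_ifs <;> simp [inner_smul_left, inner_smul_right, h0]

lemma norm_lvec_le (i : Fin n) : ‖lvec A i‖ ≤ 1 := by
  by_cases h : singularValues A i = 0
  · simp [lvec, h]
  · have : ⟪lvec A i, lvec A i⟫ = 1 := by rw [inner_lvec]; simp [h]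
    have hn := inner_self_eq_norm_sq (𝕜 := ℂ) (lvec A i)
    rw [this] at hn
    have : ‖lvec A i‖ ^ 2 = 1 := by simpa using hn.symm
    nlinarith [norm_nonneg (lvec A i)]

lemma orthonormal_lvec :
    Orthonormal ℂ (fun i : {i : Fin n // singularValues A i ≠ 0} => lvec A i) := by
  rw [orthonormal_iff_ite]
  intro i j
  rw [inner_lvec]
  rcases i with ⟨i, hi⟩; rcases j with ⟨j, hj⟩
  by_cases h : i = j <;> simp [h, hi, hj, Subtype.ext_iff]

/-- Expansion of `⟪u, A v⟫` along singular vectors. -/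
lemma inner_mulVec_expansion (u v : EuclideanSpace ℂ (Fin n)) :
    ⟪u, toE (A *ᵥ ⇑v)⟫ =
      ∑ i, (singularValues A i : ℂ) * (⟪rbasis A i, v⟫ * ⟪u, lvec A i⟫) := by
  conv_lhs => rw [← (rbasis A).sum_repr' v]
  have hcoe : ⇑(∑ i, ⟪rbasis A i, v⟫ • rbasis A i) =
      ∑ i, ⟪rbasis A i, v⟫ • ⇑(rbasis A i) := by
    rw [WithLp.ofLp_sum]; rfl
  rw [hcoe]
  have hmv : A *ᵥ (∑ i, ⟪rbasis A i, v⟫ • ⇑(rbasis A i)) =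
      ∑ i, ⟪rbasis A i, v⟫ • (A *ᵥ ⇑(rbasis A i)) := by
    simp only [← Matrix.mulVecLin_apply, map_sum, LinearMap.map_smul]
  rw [hmv]
  have htoE : toE (∑ i, ⟪rbasis A i, v⟫ • (A *ᵥ ⇑(rbasis A i))) =
      ∑ i, ⟪rbasis A i, v⟫ • toE (A *ᵥ ⇑(rbasis A i)) := by
    rw [show ∀ w, toE w = WithLp.toLp 2 w from fun _ => rfl, WithLp.toLp_sum]; rfl
  rw [htoE, inner_sum]
  refine Finset.sum_congr rfl fun i _ => ?_
  rw [inner_smul_right, mulVec_rbasis_eq, inner_smul_right]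
  ring


lemma card_filter_lt {k : ℕ} (hk : k ≤ n) :
    (Finset.univ.filter fun i : Fin n => (i : ℕ) < k).card = k := by
  have : (Finset.univ.filter fun i : Fin n => (i : ℕ) < k) =
      Finset.map ⟨Fin.castLE hk, Fin.castLE_injective hk⟩ Finset.univ := by
    ext j
    simp only [Finset.mem_filter, Finset.mem_univ, true_and, Finset.mem_map,
      Function.Embedding.coeFn_mk]
    constructor
    · intro hj
      exact ⟨⟨(j : ℕ), hj⟩, by ext; simp⟩
    · rintro ⟨i, rfl⟩
      simpa using i.isLt
  rw [this, Finset.card_map, Finset.card_univ, Fintype.card_fin]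

/-- The elementary weighted-sum estimate: if `σ` is a nonincreasing nonnegative sequence and
`0 ≤ γ ≤ 1` with `∑ γ ≤ k`, then `∑ σᵢγᵢ ≤ ∑_{i<k} σᵢ`. -/
lemma sum_mul_le {k : ℕ} (hk : k ≤ n) (σ γ : Fin n → ℝ) (hσa : Antitone σ)
    (hσ0 : ∀ i, 0 ≤ σ i) (hγ0 : ∀ i, 0 ≤ γ i) (hγ1 : ∀ i, γ i ≤ 1)
    (hγs : ∑ i, γ i ≤ (k : ℝ)) :
    ∑ i, σ i * γ i ≤ ∑ i ∈ Finset.univ.filter (fun i : Fin n => (i : ℕ) < k), σ i := by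
  rcases Nat.eq_zero_or_pos k with rfl | hkpos
  · have hz : ∀ i, γ i = 0 := by
      intro i
      have h1 : ∑ j, γ j ≤ 0 := by simpa using hγs
      have h2 : ∀ j ∈ Finset.univ, 0 ≤ γ j := fun j _ => hγ0 j
      have := Finset.sum_nonneg h2
      have hall := (Finset.sum_eq_zero_iff_of_nonneg h2).mp (le_antisymm h1 this)
      exact hall i (Finset.mem_univ i)
    simp [hz]
  · set s : Finset (Fin n) := Finset.univ.filter (fun i : Fin n => (i : ℕ) < k) with hs
    have hks : s.card = k := card_filter_lt hk
    set t : ℝ := σ ⟨k - 1, by omega⟩ with ht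
    have ht0 : 0 ≤ t := hσ0 _
    have hlow : ∀ i ∈ s, t ≤ σ i := by
      intro i hi
      have hik : (i : ℕ) < k := by simpa [hs] using hi
      apply hσa
      rw [Fin.le_def]
      show (i : ℕ) ≤ k - 1
      omega
    have hhigh : ∀ i ∈ sᶜ, σ i ≤ t := by
      intro i hi
      have hik : ¬ ((i : ℕ) < k) := by
        have := Finset.mem_compl.mp hi
        simpa [hs] using this
      apply hσa
      rw [Fin.le_def]
      show k - 1 ≤ (i : ℕ)
      omega
    -- split the sum
    have hsplit : ∑ i, σ i * γ i = ∑ i ∈ s, σ i * γ i + ∑ i ∈ sᶜ, σ i * γ i :=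
      (Finset.sum_add_sum_compl s _).symm
    have h1 : ∑ i ∈ sᶜ, σ i * γ i ≤ t * ∑ i ∈ sᶜ, γ i := by
      rw [Finset.mul_sum]
      exact Finset.sum_le_sum fun i hi => mul_le_mul_of_nonneg_right (hhigh i hi) (hγ0 i)
    have h2 : ∑ i ∈ sᶜ, γ i ≤ (k : ℝ) - ∑ i ∈ s, γ i := by
      have := Finset.sum_add_sum_compl s γ
      linarith
    have h3 : (k : ℝ) - ∑ i ∈ s, γ i = ∑ i ∈ s, (1 - γ i) := by
      rw [Finset.sum_sub_distrib, Finset.sum_const, hks]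
      simp
    have h4 : t * ∑ i ∈ s, (1 - γ i) ≤ ∑ i ∈ s, σ i * (1 - γ i) := by
      rw [Finset.mul_sum]
      exact Finset.sum_le_sum fun i hi =>
        mul_le_mul_of_nonneg_right (hlow i hi) (by linarith [hγ1 i])
    have h5 : ∑ i ∈ sᶜ, σ i * γ i ≤ ∑ i ∈ s, σ i * (1 - γ i) := by
      calc ∑ i ∈ sᶜ, σ i * γ i ≤ t * ∑ i ∈ sᶜ, γ i := h1
        _ ≤ t * ((k : ℝ) - ∑ i ∈ s, γ i) := by
            exact mul_le_mul_of_nonneg_left h2 ht0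
        _ = t * ∑ i ∈ s, (1 - γ i) := by rw [h3]
        _ ≤ ∑ i ∈ s, σ i * (1 - γ i) := h4
    calc ∑ i, σ i * γ i = ∑ i ∈ s, σ i * γ i + ∑ i ∈ sᶜ, σ i * γ i := hsplit
      _ ≤ ∑ i ∈ s, σ i * γ i + ∑ i ∈ s, σ i * (1 - γ i) := by linarith
      _ = ∑ i ∈ s, σ i := by
          rw [← Finset.sum_add_distrib]
          exact Finset.sum_congr rfl fun i _ => by ring


/-- **Ky Fan maximum principle**, upper-bound half: for orthonormal families `u, v` of size
at most `k`, `‖∑ⱼ ⟪uⱼ, A vⱼ⟫‖` is at most the sum of the `k` largest singular values of `A`. -/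
lemma kyFan_bound {k : ℕ} (hk : k ≤ n) {ι : Type} [Fintype ι]
    (u v : ι → EuclideanSpace ℂ (Fin n)) (hu : Orthonormal ℂ u) (hv : Orthonormal ℂ v)
    (hcard : Fintype.card ι ≤ k) :
    ‖∑ j, ⟪u j, toE (A *ᵥ ⇑(v j))⟫‖ ≤
      ∑ i ∈ Finset.univ.filter (fun i : Fin n => (i : ℕ) < k), singularValues A i := by
  classical
  set c : Fin n → ℂ := fun i => ∑ j, ⟪rbasis A i, v j⟫ * ⟪u j, lvec A i⟫ with hc
  have hswap : ∑ j, ⟪u j, toE (A *ᵥ ⇑(v j))⟫ = ∑ i, (singularValues A i : ℂ) * c i := by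
    simp_rw [inner_mulVec_expansion, hc, Finset.mul_sum]
    rw [Finset.sum_comm]
  set α : Fin n → ℝ := fun i => ∑ j, ‖⟪u j, lvec A i⟫‖ ^ 2 with hα
  set β : Fin n → ℝ := fun i => ∑ j, ‖⟪rbasis A i, v j⟫‖ ^ 2 with hβ
  have hγle : ∀ i, ‖c i‖ ≤ (α i + β i) / 2 := by
    intro i
    calc ‖c i‖ ≤ ∑ j, ‖⟪rbasis A i, v j⟫ * ⟪u j, lvec A i⟫‖ := norm_sum_le _ _
      _ = ∑ j, ‖⟪rbasis A i, v j⟫‖ * ‖⟪u j, lvec A i⟫‖ := by simp [norm_mul]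
      _ ≤ ∑ j, (‖⟪u j, lvec A i⟫‖ ^ 2 + ‖⟪rbasis A i, v j⟫‖ ^ 2) / 2 := by
          refine Finset.sum_le_sum fun j _ => ?_
          nlinarith [sq_nonneg (‖⟪rbasis A i, v j⟫‖ - ‖⟪u j, lvec A i⟫‖)]
      _ = (α i + β i) / 2 := by
          rw [hα, hβ, ← Finset.sum_add_distrib, ← Finset.sum_div]
  have hα1 : ∀ i, α i ≤ 1 := by
    intro i
    calc α i ≤ ‖lvec A i‖ ^ 2 := hu.sum_inner_products_le _
      _ ≤ 1 := by nlinarith [norm_lvec_le A i, norm_nonneg (lvec A i)]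
  have hβ1 : ∀ i, β i ≤ 1 := by
    intro i
    have : β i = ∑ j, ‖⟪v j, (rbasis A i : EuclideanSpace ℂ (Fin n))⟫‖ ^ 2 := by
      rw [hβ]
      exact Finset.sum_congr rfl fun j _ => by rw [norm_inner_symm]
    rw [this]
    calc _ ≤ ‖(rbasis A i : EuclideanSpace ℂ (Fin n))‖ ^ 2 := hv.sum_inner_products_le _
      _ = 1 := by rw [(rbasis A).orthonormal.1 i]; norm_num
  have hαs : ∑ i, α i ≤ (Fintype.card ι : ℝ) := by
    rw [hα, Finset.sum_comm]
    have hbound : ∀ j, ∑ i, ‖⟪u j, lvec A i⟫‖ ^ 2 ≤ 1 := by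
      intro j
      have hsplit := Finset.sum_filter_add_sum_filter_not Finset.univ
        (fun i : Fin n => singularValues A i ≠ 0) (fun i => ‖⟪u j, lvec A i⟫‖ ^ 2)
      have hz : ∑ i ∈ Finset.univ.filter (fun i : Fin n => ¬ singularValues A i ≠ 0),
          ‖⟪u j, lvec A i⟫‖ ^ 2 = 0 := by
        refine Finset.sum_eq_zero fun i hi => ?_
        have : singularValues A i = 0 := by simpa using (Finset.mem_filter.mp hi).2
        simp [lvec, this]
      have hsub : ∑ i ∈ Finset.univ.filter (fun i : Fin n => singularValues A i ≠ 0),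
          ‖⟪u j, lvec A i⟫‖ ^ 2 ≤ 1 := by
        rw [Finset.sum_subtype (p := fun i : Fin n => singularValues A i ≠ 0)
          (Finset.univ.filter fun i : Fin n => singularValues A i ≠ 0)
          (fun x => by simp) (fun i => ‖⟪u j, lvec A i⟫‖ ^ 2)]
        calc ∑ i : {i : Fin n // singularValues A i ≠ 0}, ‖⟪u j, lvec A (i : Fin n)⟫‖ ^ 2
            = ∑ i : {i : Fin n // singularValues A i ≠ 0}, ‖⟪lvec A (i : Fin n), u j⟫‖ ^ 2 :=
              Finset.sum_congr rfl fun i _ => by rw [norm_inner_symm]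
          _ ≤ ‖u j‖ ^ 2 := (orthonormal_lvec A).sum_inner_products_le (u j)
          _ = 1 := by rw [hu.1 j]; norm_num
      linarith
    calc ∑ j, ∑ i, ‖⟪u j, lvec A i⟫‖ ^ 2 ≤ ∑ _j : ι, (1 : ℝ) :=
          Finset.sum_le_sum fun j _ => hbound j
      _ = (Fintype.card ι : ℝ) := by simp
  have hβs : ∑ i, β i ≤ (Fintype.card ι : ℝ) := by
    rw [hβ, Finset.sum_comm]
    have hbound : ∀ j, ∑ i, ‖⟪rbasis A i, v j⟫‖ ^ 2 ≤ 1 := by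
      intro j
      calc ∑ i, ‖⟪rbasis A i, v j⟫‖ ^ 2 ≤ ‖v j‖ ^ 2 :=
            (rbasis A).orthonormal.sum_inner_products_le _
        _ = 1 := by rw [hv.1 j]; norm_num
    calc ∑ j, ∑ i, ‖⟪rbasis A i, v j⟫‖ ^ 2 ≤ ∑ _j : ι, (1 : ℝ) :=
          Finset.sum_le_sum fun j _ => hbound j
      _ = (Fintype.card ι : ℝ) := by simp
  -- put everything together
  rw [hswap]
  calc ‖∑ i, (singularValues A i : ℂ) * c i‖
      ≤ ∑ i, ‖(singularValues A i : ℂ) * c i‖ := norm_sum_le _ _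
    _ = ∑ i, singularValues A i * ‖c i‖ := by
        refine Finset.sum_congr rfl fun i _ => ?_
        rw [norm_mul, Complex.norm_real, Real.norm_of_nonneg (sv_nonneg A i)]
    _ ≤ _ := by
        refine sum_mul_le hk (singularValues A) (fun i => ‖c i‖) (sv_antitone A)
          (sv_nonneg A) (fun i => norm_nonneg _) (fun i => ?_) ?_
        · calc ‖c i‖ ≤ (α i + β i) / 2 := hγle i
            _ ≤ 1 := by linarith [hα1 i, hβ1 i]
        · calc ∑ i, ‖c i‖ ≤ ∑ i, (α i + β i) / 2 := Finset.sum_le_sum fun i _ => hγle i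
            _ = ((∑ i, α i) + ∑ i, β i) / 2 := by
                rw [← Finset.sum_div, ← Finset.sum_add_distrib]
            _ ≤ (k : ℝ) := by
                have := hαs; have := hβs
                have hck : (Fintype.card ι : ℝ) ≤ (k : ℝ) := by exact_mod_cast hcard
                linarith


/-! ### Unitary conjugation helpers -/

lemma dot_conj (U C : Matrix (Fin n) (Fin n) ℂ) (x y : Fin n → ℂ) :
    dotProduct (star x) ((U * C * Uᴴ) *ᵥ y) =
      dotProduct (star (Uᴴ *ᵥ x)) (C *ᵥ (Uᴴ *ᵥ y)) := by
  simp only [Matrix.star_mulVec, Matrix.conjTranspose_conjTranspose,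
    Matrix.dotProduct_mulVec, Matrix.vecMul_vecMul, Matrix.mul_assoc]

lemma inner_unitary (U : Matrix (Fin n) (Fin n) ℂ) (hU : U * Uᴴ = 1) (x y : Fin n → ℂ) :
    ⟪toE (Uᴴ *ᵥ x), toE (Uᴴ *ᵥ y)⟫ = ⟪toE x, toE y⟫ := by
  rw [inner_toE, inner_toE, Matrix.star_mulVec, Matrix.conjTranspose_conjTranspose,
    Matrix.dotProduct_mulVec, Matrix.vecMul_vecMul, ← Matrix.dotProduct_mulVec, hU,
    Matrix.one_mulVec]

lemma norm_toE_unitary (U : Matrix (Fin n) (Fin n) ℂ) (hU : U * Uᴴ = 1)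
    (x : EuclideanSpace ℂ (Fin n)) : ‖toE (Uᴴ *ᵥ ⇑x)‖ = ‖x‖ := by
  have h := inner_unitary U hU ⇑x ⇑x
  have hx : toE ⇑x = x := rfl
  rw [hx] at h
  have h1 := inner_self_eq_norm_sq (𝕜 := ℂ) (toE (Uᴴ *ᵥ ⇑x))
  have h2 := inner_self_eq_norm_sq (𝕜 := ℂ) x
  rw [h, h2] at h1
  rw [← Real.sqrt_sq (norm_nonneg (toE (Uᴴ *ᵥ ⇑x))), ← Real.sqrt_sq (norm_nonneg x), h1]


/-- The linear functional `C ↦ ⟨x, C y⟩` on matrices. -/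
noncomputable def dotLin (x y : Fin n → ℂ) : Matrix (Fin n) (Fin n) ℂ →ₗ[ℂ] ℂ where
  toFun C := dotProduct (star x) (C *ᵥ y)
  map_add' C D := by simp [Matrix.add_mulVec, dotProduct_add]
  map_smul' c C := by simp [Matrix.smul_mulVec, dotProduct_smul]

lemma inner_toE_mulVec (x : EuclideanSpace ℂ (Fin n)) (C : Matrix (Fin n) (Fin n) ℂ)
    (y : Fin n → ℂ) : ⟪x, toE (C *ᵥ y)⟫ = dotLin ⇑x y C := inner_toE ⇑x _


open NormedSpace Matrix in
/-- Exponentials of multiples of a fixed matrix multiply by adding coefficients. -/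
lemma exp_smul_mul (b : Matrix (Fin n) (Fin n) ℂ) (w w' : ℂ) :
    exp (w • b) * exp (w' • b) = exp ((w + w') • b) := by
  rw [add_smul]
  exact (Matrix.exp_add_of_commute _ _
    (((Commute.refl b).smul_left w).smul_right w')).symm

open NormedSpace Matrix in
lemma exp_smul_conjTranspose {b : Matrix (Fin n) (Fin n) ℂ} (hb : b.IsHermitian) (w : ℂ) :
    (exp (w • b))ᴴ = exp ((starRingEnd ℂ w) • b) := by
  rw [← Matrix.exp_conjTranspose, Matrix.conjTranspose_smul, hb.eq]
  rfl

open NormedSpace Matrix in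
lemma exp_smul_unitary {b : Matrix (Fin n) (Fin n) ℂ} (hb : b.IsHermitian) {w : ℂ}
    (hw : w.re = 0) :
    exp (w • b) * (exp (w • b))ᴴ = 1 := by
  rw [exp_smul_conjTranspose hb, exp_smul_mul]
  have : w + (starRingEnd ℂ w) = 0 := by
    apply Complex.ext <;> simp [hw]
  rw [this, zero_smul, exp_zero]

end KyFanAux

/-- The sum of the `k` largest singular values of `A` (the Ky Fan `k`-norm). -/
noncomputable def kyFanSum {m : ℕ} (A : Matrix (Fin m) (Fin m) ℂ) (k : ℕ) : ℝ :=
  ∑ i ∈ Finset.univ.filter (fun i : Fin m => (i : ℕ) < k), singularValues A i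

/-- The fractional power `b ^ θ` of a positive semidefinite matrix `b`, obtained by applying
`t ↦ t ^ θ` to the eigenvalues in a spectral decomposition. -/
noncomputable def psdPow {m : ℕ} {b : Matrix (Fin m) (Fin m) ℂ} (hb : b.PosSemidef) (θ : ℝ) :
    Matrix (Fin m) (Fin m) ℂ :=
  (hb.isHermitian.eigenvectorUnitary : Matrix (Fin m) (Fin m) ℂ) *
    Matrix.diagonal (fun i => ((hb.isHermitian.eigenvalues i ^ θ : ℝ) : ℂ)) *
    (star hb.isHermitian.eigenvectorUnitary : Matrix (Fin m) (Fin m) ℂ)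

open NormedSpace in
/-- Matrix instance of Lemma 2.6: for arbitrary `a`, Hermitian `b` and `θ ∈ (0,1)`,
the Ky Fan sums of `exp(θb) * a * exp((1-θ)b)` are dominated by the corresponding sums of
`max (σ_i (a * exp b)) (σ_i (exp b * a))`. -/
theorem stmt_4 {n : ℕ} (a b : Matrix (Fin n) (Fin n) ℂ)
    (hb : b.IsHermitian) (θ : ℝ) (hθ : θ ∈ Set.Ioo (0 : ℝ) 1) :
    ∀ k, k ≤ n →
      kyFanSum (exp ((θ : ℂ) • b) * a * exp (((1 - θ : ℝ) : ℂ) • b)) k ≤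
        ∑ i ∈ Finset.univ.filter (fun i : Fin n => (i : ℕ) < k),
          max (singularValues (a * exp b) i) (singularValues (exp b * a) i) := by
  classical
  open Matrix KyFanAux in
  intro k hk
  obtain ⟨hθ0, hθ1⟩ := hθ
  letI : SeminormedRing (Matrix (Fin n) (Fin n) ℂ) := Matrix.linftyOpSemiNormedRing
  letI : NormedRing (Matrix (Fin n) (Fin n) ℂ) := Matrix.linftyOpNormedRing
  letI : NormedAlgebra ℂ (Matrix (Fin n) (Fin n) ℂ) := Matrix.linftyOpNormedAlgebra
  set M : Matrix (Fin n) (Fin n) ℂ :=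
    exp ((θ : ℂ) • b) * a * exp (((1 - θ : ℝ) : ℂ) • b) with hMdef
  set X : Matrix (Fin n) (Fin n) ℂ := a * exp b with hXdef
  set Y : Matrix (Fin n) (Fin n) ℂ := exp b * a with hYdef
  set R : ℝ := ∑ i ∈ Finset.univ.filter (fun i : Fin n => (i : ℕ) < k),
          max (singularValues X i) (singularValues Y i) with hRdef
  set G : ℂ → Matrix (Fin n) (Fin n) ℂ :=
    fun z => exp (z • b) * a * exp ((1 - z) • b) with hGdef
  set s : Finset (Fin n) :=
    Finset.univ.filter (fun j : Fin n => (j : ℕ) < k ∧ singularValues M j ≠ 0) with hsdef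
  set F : ℂ → ℂ :=
    fun z => ∑ j ∈ s, inner (𝕜 := ℂ) (lvec M j) (toE ((G z) *ᵥ ⇑(rbasis M j))) with hFdef
  -- the value at θ is the Ky Fan sum
  have hGθ : G (θ : ℂ) = M := by
    rw [hGdef, hMdef]
    norm_num
  have hval : kyFanSum M k = ‖F (θ : ℂ)‖ := by
    have hterm : ∀ j ∈ s, inner (𝕜 := ℂ) (lvec M j) (toE (M *ᵥ ⇑(rbasis M j))) =
        ((singularValues M j : ℝ) : ℂ) := by
      intro j hj
      have hjσ : singularValues M j ≠ 0 := by
        rw [hsdef] at hj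
        simp only [Finset.mem_filter] at hj
        exact hj.2.2
      rw [mulVec_rbasis_eq, inner_smul_right, inner_lvec, if_pos ⟨rfl, hjσ⟩, mul_one]
    have hFθ : F (θ : ℂ) = (((∑ j ∈ s, singularValues M j : ℝ)) : ℂ) := by
      rw [hFdef]
      simp only [hGθ]
      push_cast
      exact Finset.sum_congr rfl hterm
    have hkfs : kyFanSum M k = ∑ j ∈ s, singularValues M j := by
      rw [kyFanSum]
      symm
      apply Finset.sum_subset
      · intro j hj
        rw [hsdef] at hj
        simp only [Finset.mem_filter] at hj ⊢
        exact ⟨hj.1, hj.2.1⟩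
      · intro j hj hns
        rw [hsdef] at hns
        simp only [Finset.mem_filter] at hj hns
        by_contra hne
        exact hns ⟨hj.1, hj.2, hne⟩
    rw [hkfs, hFθ, Complex.norm_real,
      Real.norm_of_nonneg (Finset.sum_nonneg fun j _ => sv_nonneg M j)]
  -- differentiability
  have hdiff : Differentiable ℂ F := by
    have hexp1 : Differentiable ℂ (fun z : ℂ => exp (z • b)) := fun z =>
      (hasDerivAt_exp_smul_const (𝕂 := ℂ) b z).differentiableAt
    have hexp2 : Differentiable ℂ (fun z : ℂ => exp ((1 - z) • b)) :=
      hexp1.comp ((differentiable_const (1 : ℂ)).sub differentiable_id)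
    have hG : Differentiable ℂ G := by
      rw [hGdef]
      exact (hexp1.mul (differentiable_const a)).mul hexp2
    rw [hFdef]
    apply Differentiable.fun_sum
    intro j _
    simp only [inner_toE_mulVec]
    exact ((dotLin (⇑(lvec M j)) (⇑(rbasis M j))).toContinuousLinearMap.differentiable).comp hG
  -- unitary conjugation across the strip
  have hkey : ∀ c z : ℂ, z.re = c.re →
      G z = exp ((z - c) • b) * G c * (exp ((z - c) • b))ᴴ := by
    intro c z h1
    have hct : (exp ((z - c) • b))ᴴ = exp (-(z - c) • b) := by
      rw [exp_smul_conjTranspose hb,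
        show (starRingEnd ℂ) (z - c) = -(z - c) from Complex.ext (by simp [h1]) (by simp; ring)]
    rw [hct, hGdef]
    simp only
    have e1 : exp ((z - c) • b) * exp (c • b) = exp (z • b) := by
      rw [exp_smul_mul, show z - c + c = z by ring]
    have e2 : exp ((1 - c) • b) * exp (-(z - c) • b) = exp ((1 - z) • b) := by
      rw [exp_smul_mul, show 1 - c + -(z - c) = 1 - z by ring]
    rw [show exp ((z - c) • b) * (exp (c • b) * a * exp ((1 - c) • b)) *
        exp (-(z - c) • b) =
        (exp ((z - c) • b) * exp (c • b)) * a *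
        (exp ((1 - c) • b) * exp (-(z - c) • b)) by noncomm_ring, e1, e2]
  have hUU : ∀ z : ℂ, z.re = 0 → exp (z • b) * (exp (z • b))ᴴ = 1 :=
    fun z hz => exp_smul_unitary hb hz
  -- boundedness on the strip
  have hbdd : BddAbove ((norm ∘ F) '' Complex.HadamardThreeLines.verticalClosedStrip 0 1) := by
    obtain ⟨C, hC0, hC⟩ : ∃ C, 0 ≤ C ∧ ∀ (t : ℝ) (w : Fin n → ℂ), t ∈ Set.Icc (0 : ℝ) 1 →
        ‖toE w‖ ≤ 1 → ‖toE (G ((t : ℂ)) *ᵥ w)‖ ≤ C := by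
      have hcomp : IsCompact (Set.Icc (0 : ℝ) 1 ×ˢ
          Metric.closedBall (0 : EuclideanSpace ℂ (Fin n)) 1) :=
        isCompact_Icc.prod (isCompact_closedBall _ _)
      have hexp1 : Differentiable ℂ (fun z : ℂ => exp (z • b)) := fun z =>
        (hasDerivAt_exp_smul_const (𝕂 := ℂ) b z).differentiableAt
      have hexp2 : Differentiable ℂ (fun z : ℂ => exp ((1 - z) • b)) :=
        hexp1.comp ((differentiable_const (1 : ℂ)).sub differentiable_id)
      have hG : Differentiable ℂ G := by
        rw [hGdef]
        exact (hexp1.mul (differentiable_const a)).mul hexp2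
      have hcont : Continuous (fun p : ℝ × EuclideanSpace ℂ (Fin n) =>
          ‖toE (G ((p.1 : ℂ)) *ᵥ ⇑p.2)‖) := by
        have h1 : Continuous (fun p : ℝ × EuclideanSpace ℂ (Fin n) => G ((p.1 : ℂ)) *ᵥ ⇑p.2) :=
          Continuous.matrix_mulVec
            ((hG.continuous.comp Complex.continuous_ofReal).comp continuous_fst)
            ((PiLp.continuous_ofLp 2 _).comp continuous_snd)
        exact (((PiLp.continuous_toLp 2 (fun _ : Fin n => ℂ)).comp h1).norm)
      obtain ⟨C, hC⟩ := hcomp.exists_bound_of_continuousOn hcont.continuousOn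
      refine ⟨max C 0, le_max_right _ _, ?_⟩
      intro t w ht hw
      have hp : ((t, toE w) : ℝ × EuclideanSpace ℂ (Fin n)) ∈ Set.Icc (0 : ℝ) 1 ×ˢ
          Metric.closedBall (0 : EuclideanSpace ℂ (Fin n)) 1 :=
        ⟨ht, by rwa [Metric.mem_closedBall, dist_zero_right]⟩
      have hCb := hC (t, toE w) hp
      have hcoe : ⇑(toE w) = w := rfl
      rw [hcoe] at hCb
      calc ‖toE (G ((t : ℂ)) *ᵥ w)‖ ≤ |‖toE (G ((t : ℂ)) *ᵥ w)‖| := le_abs_self _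
        _ ≤ C := hCb
        _ ≤ max C 0 := le_max_left _ _
    refine ⟨(s.card : ℝ) * C, ?_⟩
    rintro r ⟨z, hz, rfl⟩
    have hzre : z.re ∈ Set.Icc (0 : ℝ) 1 := hz
    set U : Matrix (Fin n) (Fin n) ℂ := exp ((z - (z.re : ℂ)) • b) with hUdef
    have hGz : G z = U * G ((z.re : ℂ)) * Uᴴ := hkey ((z.re : ℂ)) z (by simp)
    have hUu : U * Uᴴ = 1 := hUU _ (by simp)
    have hterm : ∀ j ∈ s,
        ‖inner (𝕜 := ℂ) (lvec M j) (toE ((G z) *ᵥ ⇑(rbasis M j)))‖ ≤ C := by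
      intro j _
      rw [hGz]
      have hrw : inner (𝕜 := ℂ) (lvec M j) (toE ((U * G ((z.re : ℂ)) * Uᴴ) *ᵥ ⇑(rbasis M j))) =
          inner (𝕜 := ℂ) (toE (Uᴴ *ᵥ ⇑(lvec M j)))
            (toE ((G ((z.re : ℂ))) *ᵥ (Uᴴ *ᵥ ⇑(rbasis M j)))) :=
        (inner_toE ⇑(lvec M j) _).trans ((dot_conj U (G ((z.re : ℂ))) ⇑(lvec M j) ⇑(rbasis M j)).trans
          (inner_toE _ _).symm)
      rw [hrw]
      calc ‖inner (𝕜 := ℂ) (toE (Uᴴ *ᵥ ⇑(lvec M j)))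
            (toE ((G ((z.re : ℂ))) *ᵥ (Uᴴ *ᵥ ⇑(rbasis M j))))‖
          ≤ ‖toE (Uᴴ *ᵥ ⇑(lvec M j))‖ * ‖toE ((G ((z.re : ℂ))) *ᵥ (Uᴴ *ᵥ ⇑(rbasis M j)))‖ :=
            norm_inner_le_norm _ _
        _ ≤ 1 * C := by
            apply mul_le_mul
            · rw [norm_toE_unitary U hUu]
              exact norm_lvec_le M j
            · exact hC z.re (Uᴴ *ᵥ ⇑(rbasis M j)) hzre
                (by rw [norm_toE_unitary U hUu, (rbasis M).orthonormal.1 j])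
            · exact norm_nonneg _
            · exact zero_le_one
        _ = C := one_mul C
    calc ‖F z‖ ≤ ∑ j ∈ s, ‖inner (𝕜 := ℂ) (lvec M j) (toE ((G z) *ᵥ ⇑(rbasis M j)))‖ := by
          rw [hFdef]
          exact norm_sum_le _ _
      _ ≤ ∑ _j ∈ s, C := Finset.sum_le_sum hterm
      _ = (s.card : ℝ) * C := by rw [Finset.sum_const, nsmul_eq_mul]
  -- endpoint bounds
  have hcards : Fintype.card ↥s ≤ k := by
    rw [Fintype.card_coe]
    calc s.card ≤ (Finset.univ.filter (fun i : Fin n => (i : ℕ) < k)).card := by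
          apply Finset.card_le_card
          intro j hj
          rw [hsdef] at hj
          simp only [Finset.mem_filter] at hj ⊢
          exact ⟨hj.1, hj.2.1⟩
      _ = k := card_filter_lt hk
  have hRX : ∑ i ∈ Finset.univ.filter (fun i : Fin n => (i : ℕ) < k), singularValues X i ≤ R := by
    rw [hRdef]
    exact Finset.sum_le_sum fun i _ => le_max_left _ _
  have hRY : ∑ i ∈ Finset.univ.filter (fun i : Fin n => (i : ℕ) < k), singularValues Y i ≤ R := by
    rw [hRdef]
    exact Finset.sum_le_sum fun i _ => le_max_right _ _
  have ha0 : ∀ z : ℂ, z ∈ Complex.re ⁻¹' {0} → ‖F z‖ ≤ R := by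
    intro z hz
    have hzre : z.re = 0 := hz
    set U : Matrix (Fin n) (Fin n) ℂ := exp ((z - 0) • b) with hUdef
    have hGz : G z = U * G 0 * Uᴴ := hkey 0 z (by simp [hzre])
    have hUu : U * Uᴴ = 1 := hUU _ (by simp [hzre])
    have hG0 : G 0 = X := by
      rw [hGdef]
      simp only
      rw [zero_smul, exp_zero, one_mul, sub_zero, one_smul, hXdef]
    have hFz : F z = ∑ j ∈ s, inner (𝕜 := ℂ) (toE (Uᴴ *ᵥ ⇑(lvec M j)))
        (toE (X *ᵥ (Uᴴ *ᵥ ⇑(rbasis M j)))) := by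
      rw [hFdef]
      refine Finset.sum_congr rfl fun j _ => ?_
      rw [hGz, hG0]
      exact (inner_toE ⇑(lvec M j) _).trans ((dot_conj U X ⇑(lvec M j) ⇑(rbasis M j)).trans
        (inner_toE _ _).symm)
    have hsum : ∑ j ∈ s, inner (𝕜 := ℂ) (toE (Uᴴ *ᵥ ⇑(lvec M j)))
        (toE (X *ᵥ (Uᴴ *ᵥ ⇑(rbasis M j)))) =
        ∑ j : ↥s, inner (𝕜 := ℂ) (toE (Uᴴ *ᵥ ⇑(lvec M (j : Fin n))))
          (toE (X *ᵥ (Uᴴ *ᵥ ⇑(rbasis M (j : Fin n))))) :=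
      (Finset.sum_coe_sort s _).symm
    have horthu : Orthonormal ℂ (fun j : ↥s => toE (Uᴴ *ᵥ ⇑(lvec M (j : Fin n)))) := by
      rw [orthonormal_iff_ite]
      intro i j
      rw [inner_unitary U hUu, show toE ⇑(lvec M (i : Fin n)) = lvec M (i : Fin n) from rfl,
        show toE ⇑(lvec M (j : Fin n)) = lvec M (j : Fin n) from rfl, inner_lvec]
      have hiσ : singularValues M (i : Fin n) ≠ 0 := by
        have hmem : (i : Fin n) ∈ Finset.univ.filter
            (fun j : Fin n => (j : ℕ) < k ∧ singularValues M j ≠ 0) := by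
          simpa only [hsdef] using i.2
        simp only [Finset.mem_filter] at hmem
        exact hmem.2.2
      by_cases hij : i = j
      · subst hij
        simp [hiσ]
      · have hne : (i : Fin n) ≠ (j : Fin n) := fun hc => hij (Subtype.ext hc)
        simp [hne, hij]
    have horthv : Orthonormal ℂ (fun j : ↥s => toE (Uᴴ *ᵥ ⇑(rbasis M (j : Fin n)))) := by
      rw [orthonormal_iff_ite]
      intro i j
      rw [inner_unitary U hUu, show toE ⇑(rbasis M (i : Fin n)) = rbasis M (i : Fin n) from rfl,
        show toE ⇑(rbasis M (j : Fin n)) = rbasis M (j : Fin n) from rfl,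
        orthonormal_iff_ite.mp (rbasis M).orthonormal (i : Fin n) (j : Fin n)]
      by_cases hij : i = j
      · simp [hij]
      · have hne : (i : Fin n) ≠ (j : Fin n) := fun hc => hij (Subtype.ext hc)
        simp [hne, hij]
    calc ‖F z‖ = ‖∑ j : ↥s, inner (𝕜 := ℂ) (toE (Uᴴ *ᵥ ⇑(lvec M (j : Fin n))))
          (toE (X *ᵥ (Uᴴ *ᵥ ⇑(rbasis M (j : Fin n)))))‖ := by rw [hFz, hsum]
      _ ≤ ∑ i ∈ Finset.univ.filter (fun i : Fin n => (i : ℕ) < k), singularValues X i :=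
          by have h := kyFan_bound X hk _ _ horthu horthv hcards
             simp only [ofLp_toE] at h
             exact h
      _ ≤ R := hRX
  have ha1 : ∀ z : ℂ, z ∈ Complex.re ⁻¹' {1} → ‖F z‖ ≤ R := by
    intro z hz
    have hzre : z.re = 1 := hz
    set U : Matrix (Fin n) (Fin n) ℂ := exp ((z - 1) • b) with hUdef
    have hGz : G z = U * G 1 * Uᴴ := hkey 1 z (by simp [hzre])
    have hUu : U * Uᴴ = 1 := hUU _ (by simp [hzre])
    have hG1 : G 1 = Y := by
      rw [hGdef]
      simp only
      rw [one_smul, sub_self, zero_smul, exp_zero, mul_one, hYdef]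
    have hFz : F z = ∑ j ∈ s, inner (𝕜 := ℂ) (toE (Uᴴ *ᵥ ⇑(lvec M j)))
        (toE (Y *ᵥ (Uᴴ *ᵥ ⇑(rbasis M j)))) := by
      rw [hFdef]
      refine Finset.sum_congr rfl fun j _ => ?_
      rw [hGz, hG1]
      exact (inner_toE ⇑(lvec M j) _).trans ((dot_conj U Y ⇑(lvec M j) ⇑(rbasis M j)).trans
        (inner_toE _ _).symm)
    have hsum : ∑ j ∈ s, inner (𝕜 := ℂ) (toE (Uᴴ *ᵥ ⇑(lvec M j)))
        (toE (Y *ᵥ (Uᴴ *ᵥ ⇑(rbasis M j)))) =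
        ∑ j : ↥s, inner (𝕜 := ℂ) (toE (Uᴴ *ᵥ ⇑(lvec M (j : Fin n))))
          (toE (Y *ᵥ (Uᴴ *ᵥ ⇑(rbasis M (j : Fin n))))) :=
      (Finset.sum_coe_sort s _).symm
    have horthu : Orthonormal ℂ (fun j : ↥s => toE (Uᴴ *ᵥ ⇑(lvec M (j : Fin n)))) := by
      rw [orthonormal_iff_ite]
      intro i j
      rw [inner_unitary U hUu, show toE ⇑(lvec M (i : Fin n)) = lvec M (i : Fin n) from rfl,
        show toE ⇑(lvec M (j : Fin n)) = lvec M (j : Fin n) from rfl, inner_lvec]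
      have hiσ : singularValues M (i : Fin n) ≠ 0 := by
        have hmem : (i : Fin n) ∈ Finset.univ.filter
            (fun j : Fin n => (j : ℕ) < k ∧ singularValues M j ≠ 0) := by
          simpa only [hsdef] using i.2
        simp only [Finset.mem_filter] at hmem
        exact hmem.2.2
      by_cases hij : i = j
      · subst hij
        simp [hiσ]
      · have hne : (i : Fin n) ≠ (j : Fin n) := fun hc => hij (Subtype.ext hc)
        simp [hne, hij]
    have horthv : Orthonormal ℂ (fun j : ↥s => toE (Uᴴ *ᵥ ⇑(rbasis M (j : Fin n)))) := by
      rw [orthonormal_iff_ite]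
      intro i j
      rw [inner_unitary U hUu, show toE ⇑(rbasis M (i : Fin n)) = rbasis M (i : Fin n) from rfl,
        show toE ⇑(rbasis M (j : Fin n)) = rbasis M (j : Fin n) from rfl,
        orthonormal_iff_ite.mp (rbasis M).orthonormal (i : Fin n) (j : Fin n)]
      by_cases hij : i = j
      · simp [hij]
      · have hne : (i : Fin n) ≠ (j : Fin n) := fun hc => hij (Subtype.ext hc)
        simp [hne, hij]
    calc ‖F z‖ = ‖∑ j : ↥s, inner (𝕜 := ℂ) (toE (Uᴴ *ᵥ ⇑(lvec M (j : Fin n))))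
          (toE (Y *ᵥ (Uᴴ *ᵥ ⇑(rbasis M (j : Fin n)))))‖ := by rw [hFz, hsum]
      _ ≤ ∑ i ∈ Finset.univ.filter (fun i : Fin n => (i : ℕ) < k), singularValues Y i :=
          by have h := kyFan_bound Y hk _ _ horthu horthv hcards
             simp only [ofLp_toE] at h
             exact h
      _ ≤ R := hRY
  -- three lines
  have hmem : (θ : ℂ) ∈ Complex.HadamardThreeLines.verticalClosedStrip 0 1 := by
    simp only [Complex.HadamardThreeLines.verticalClosedStrip, Set.mem_preimage,
      Complex.ofReal_re, Set.mem_Icc]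
    constructor <;> linarith
  have h3 := Complex.HadamardThreeLines.norm_le_interp_of_mem_verticalClosedStrip' (f := F) zero_lt_one hmem
    (hdiff.diffContOnCl) hbdd ha0 ha1
  rw [Complex.ofReal_re] at h3
  simp only [sub_zero, div_one] at h3
  have hRnn : 0 ≤ R := by
    rw [hRdef]
    exact Finset.sum_nonneg fun i _ => le_max_of_le_left (sv_nonneg X i)
  rw [hval]
  rcases eq_or_lt_of_le hRnn with hR0 | hRpos
  · rw [← hR0, Real.zero_rpow (by linarith), Real.zero_rpow (by linarith), mul_zero] at h3
    rw [← hR0]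
    exact h3
  · calc ‖F (θ : ℂ)‖ ≤ R ^ (1 - θ) * R ^ θ := h3
      _ = R := by
        rw [← Real.rpow_add hRpos]
        norm_num
end

section
/- (Example 2.5.) Let λ, μ ∈ ℝ with λ > μ, and in M₂(ℂ) let a be the matrix with (1,2)-entry equal to 1 and all other entries 0, and let b be the diagonal matrix diag(λ, μ). Then b is Hermitian, a · exp(b) = e^μ • a, exp(b/2) · a · exp(b/2) = e^((λ+μ)/2) • a, and exp(b/2) · a · exp(b/2) is NOT submajorized by a · exp(b) in the sense of Hardy–Littlewood; in particular the largest singular value of exp(b/2) a exp(b/2), which equals e^((λ+μ)/2), strictly exceeds the largest singular value of a·exp(b), which equals e^μ. -/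
open scoped BigOperators ComplexOrder

set_option linter.unnecessarySeqFocus false

open Matrix in
lemma trace_eq_sum_ev {A : Matrix (Fin 2) (Fin 2) ℂ} (hA : A.IsHermitian) :
    A.trace = ∑ i, (hA.eigenvalues i : ℂ) := by
  conv_lhs => rw [hA.spectral_theorem]
  rw [Unitary.conjStarAlgAut_apply, Matrix.trace_mul_cycle,
    Matrix.UnitaryGroup.star_mul_self hA.eigenvectorUnitary, Matrix.one_mul,
    Matrix.trace_diagonal]
  rfl

open Matrix in
lemma sv_smul (c : ℝ) (hc : 0 < c) :
    singularValues ((c:ℂ) • !![0,1;0,0]) 0 = c := by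
  set A : Matrix (Fin 2) (Fin 2) ℂ := (c:ℂ) • !![0,1;0,0] with hA
  have hAA : Aᴴ * A = Matrix.diagonal ![0, ((c^2 : ℝ) : ℂ)] := by
    ext i j
    fin_cases i <;> fin_cases j <;>
      simp [hA, Matrix.mul_apply, Fin.sum_univ_two, Matrix.diagonal] <;> ring
  have H := Matrix.isHermitian_conjTranspose_mul_self A
  have hsum : H.eigenvalues 0 + H.eigenvalues 1 = c^2 := by
    have h1 : (Aᴴ * A).trace = ∑ i, (H.eigenvalues i : ℂ) := trace_eq_sum_ev H
    have h2 : (Aᴴ * A).trace = ((c^2 : ℝ) : ℂ) := by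
      rw [hAA]; simp [Matrix.trace_diagonal]
    rw [h2, Fin.sum_univ_two] at h1
    exact_mod_cast h1.symm
  have hprod : H.eigenvalues 0 * H.eigenvalues 1 = 0 := by
    have h1 : (Aᴴ * A).det = ∏ i, (H.eigenvalues i : ℂ) := H.det_eq_prod_eigenvalues
    have h2 : (Aᴴ * A).det = 0 := by
      rw [hAA]; simp [Matrix.det_fin_two, Matrix.diagonal]
    rw [h2, Fin.prod_univ_two] at h1
    exact_mod_cast h1.symm
  have hnn : ∀ i, 0 ≤ H.eigenvalues i :=
    (Matrix.posSemidef_conjTranspose_mul_self A).eigenvalues_nonneg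
  set σ := Tuple.sort H.eigenvalues with hσ
  have hmono : Monotone (H.eigenvalues ∘ σ) := Tuple.monotone_sort _
  have hsum' : H.eigenvalues (σ 0) + H.eigenvalues (σ 1) = c^2 := by
    have h2 : ∑ i, H.eigenvalues (σ i) = ∑ i, H.eigenvalues i := Equiv.sum_comp σ _
    rw [Fin.sum_univ_two, Fin.sum_univ_two] at h2
    rw [h2]; exact hsum
  have hprod' : H.eigenvalues (σ 0) * H.eigenvalues (σ 1) = 0 := by
    have h2 : ∏ i, H.eigenvalues (σ i) = ∏ i, H.eigenvalues i := Equiv.prod_comp σ _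
    rw [Fin.prod_univ_two, Fin.prod_univ_two] at h2
    rw [h2]; exact hprod
  have hle : H.eigenvalues (σ 0) ≤ H.eigenvalues (σ 1) := hmono (by norm_num : (0:Fin 2) ≤ 1)
  have hval : H.eigenvalues (σ 1) = c^2 := by
    rcases mul_eq_zero.mp hprod' with h0 | h0
    · rw [h0, zero_add] at hsum'; exact hsum'
    · exfalso; rw [h0] at hle hsum'
      have := hnn (σ 0)
      nlinarith
  show Real.sqrt (H.eigenvalues (σ (Fin.rev 0))) = c
  have hr : (Fin.rev (0 : Fin 2)) = 1 := by decide
  rw [hr, hval, Real.sqrt_sq hc.le]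

lemma kyFanSum_one (A : Matrix (Fin 2) (Fin 2) ℂ) : kyFanSum A 1 = singularValues A 0 := by
  unfold kyFanSum
  have h : (Finset.univ.filter (fun i : Fin 2 => (i : ℕ) < 1)) = {0} := by decide
  rw [h, Finset.sum_singleton]

lemma exp_diag_real (lam mu : ℝ) :
    NormedSpace.exp (Matrix.diagonal ![(lam : ℂ), (mu : ℂ)]) =
      Matrix.diagonal ![((Real.exp lam : ℝ) : ℂ), ((Real.exp mu : ℝ) : ℂ)] := by
  rw [Matrix.exp_diagonal, Pi.exp_def]
  ext i j
  fin_cases i <;> fin_cases j <;>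
    simp [Matrix.diagonal, ← Complex.exp_eq_exp_ℂ, ← Complex.ofReal_exp]

open NormedSpace in
/-- Example 2.5: for `a = !![0,1;0,0]` and `b = diag(λ, μ)` with `λ > μ`, we have
`a * exp b = e^μ • a`, `exp(b/2) * a * exp(b/2) = e^((λ+μ)/2) • a`, the submajorization
`exp(b/2) * a * exp(b/2) ≺≺ a * exp b` fails, and the largest singular value of the
left-hand side, `e^((λ+μ)/2)`, strictly exceeds that of the right-hand side, `e^μ`. -/
theorem stmt_5 (lam mu : ℝ) (h : mu < lam) :
    (Matrix.diagonal ![(lam : ℂ), (mu : ℂ)]).IsHermitian ∧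
    (!![0, 1; 0, 0] : Matrix (Fin 2) (Fin 2) ℂ) * exp (Matrix.diagonal ![(lam : ℂ), (mu : ℂ)]) =
      ((Real.exp mu : ℝ) : ℂ) • (!![0, 1; 0, 0] : Matrix (Fin 2) (Fin 2) ℂ) ∧
    exp ((2 : ℂ)⁻¹ • Matrix.diagonal ![(lam : ℂ), (mu : ℂ)]) *
        (!![0, 1; 0, 0] : Matrix (Fin 2) (Fin 2) ℂ) *
        exp ((2 : ℂ)⁻¹ • Matrix.diagonal ![(lam : ℂ), (mu : ℂ)]) =
      ((Real.exp ((lam + mu) / 2) : ℝ) : ℂ) • (!![0, 1; 0, 0] : Matrix (Fin 2) (Fin 2) ℂ) ∧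
    ¬ (∀ k, k ≤ 2 →
        kyFanSum (exp ((2 : ℂ)⁻¹ • Matrix.diagonal ![(lam : ℂ), (mu : ℂ)]) *
            (!![0, 1; 0, 0] : Matrix (Fin 2) (Fin 2) ℂ) *
            exp ((2 : ℂ)⁻¹ • Matrix.diagonal ![(lam : ℂ), (mu : ℂ)])) k ≤
          kyFanSum ((!![0, 1; 0, 0] : Matrix (Fin 2) (Fin 2) ℂ) *
            exp (Matrix.diagonal ![(lam : ℂ), (mu : ℂ)])) k) ∧
    singularValues (exp ((2 : ℂ)⁻¹ • Matrix.diagonal ![(lam : ℂ), (mu : ℂ)]) *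
        (!![0, 1; 0, 0] : Matrix (Fin 2) (Fin 2) ℂ) *
        exp ((2 : ℂ)⁻¹ • Matrix.diagonal ![(lam : ℂ), (mu : ℂ)])) 0 =
      Real.exp ((lam + mu) / 2) ∧
    singularValues ((!![0, 1; 0, 0] : Matrix (Fin 2) (Fin 2) ℂ) *
        exp (Matrix.diagonal ![(lam : ℂ), (mu : ℂ)])) 0 = Real.exp mu ∧
    singularValues ((!![0, 1; 0, 0] : Matrix (Fin 2) (Fin 2) ℂ) *
        exp (Matrix.diagonal ![(lam : ℂ), (mu : ℂ)])) 0 <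
      singularValues (exp ((2 : ℂ)⁻¹ • Matrix.diagonal ![(lam : ℂ), (mu : ℂ)]) *
        (!![0, 1; 0, 0] : Matrix (Fin 2) (Fin 2) ℂ) *
        exp ((2 : ℂ)⁻¹ • Matrix.diagonal ![(lam : ℂ), (mu : ℂ)])) 0 := by
  have hmul : Real.exp (lam/2) * Real.exp (mu/2) = Real.exp ((lam + mu)/2) := by
    rw [← Real.exp_add]; ring_nf
  have hhalf : (2 : ℂ)⁻¹ • Matrix.diagonal ![(lam : ℂ), (mu : ℂ)] =
      Matrix.diagonal ![((lam/2 : ℝ) : ℂ), ((mu/2 : ℝ) : ℂ)] := by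
    ext i j
    fin_cases i <;> fin_cases j <;> simp [Matrix.diagonal] <;> push_cast <;> ring
  have hE : exp (Matrix.diagonal ![(lam : ℂ), (mu : ℂ)]) =
      Matrix.diagonal ![((Real.exp lam : ℝ) : ℂ), ((Real.exp mu : ℝ) : ℂ)] :=
    exp_diag_real lam mu
  have hE2 : exp ((2 : ℂ)⁻¹ • Matrix.diagonal ![(lam : ℂ), (mu : ℂ)]) =
      Matrix.diagonal ![((Real.exp (lam/2) : ℝ) : ℂ), ((Real.exp (mu/2) : ℝ) : ℂ)] := by
    rw [hhalf]; exact exp_diag_real (lam/2) (mu/2)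
  have h2 : (!![0, 1; 0, 0] : Matrix (Fin 2) (Fin 2) ℂ) *
      exp (Matrix.diagonal ![(lam : ℂ), (mu : ℂ)]) =
      ((Real.exp mu : ℝ) : ℂ) • (!![0, 1; 0, 0] : Matrix (Fin 2) (Fin 2) ℂ) := by
    rw [hE]
    ext i j
    fin_cases i <;> fin_cases j <;>
      simp [Matrix.mul_apply, Fin.sum_univ_two, Matrix.diagonal]
  have h3 : exp ((2 : ℂ)⁻¹ • Matrix.diagonal ![(lam : ℂ), (mu : ℂ)]) *
        (!![0, 1; 0, 0] : Matrix (Fin 2) (Fin 2) ℂ) *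
        exp ((2 : ℂ)⁻¹ • Matrix.diagonal ![(lam : ℂ), (mu : ℂ)]) =
      ((Real.exp ((lam + mu) / 2) : ℝ) : ℂ) • (!![0, 1; 0, 0] : Matrix (Fin 2) (Fin 2) ℂ) := by
    rw [hE2]
    ext i j
    fin_cases i <;> fin_cases j <;>
      simp [Matrix.mul_apply, Fin.sum_univ_two, Matrix.diagonal] <;>
      (rw [← Complex.exp_add]; ring_nf)
  have hs1 : singularValues (exp ((2 : ℂ)⁻¹ • Matrix.diagonal ![(lam : ℂ), (mu : ℂ)]) *
        (!![0, 1; 0, 0] : Matrix (Fin 2) (Fin 2) ℂ) *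
        exp ((2 : ℂ)⁻¹ • Matrix.diagonal ![(lam : ℂ), (mu : ℂ)])) 0 =
      Real.exp ((lam + mu) / 2) := by
    rw [h3]; exact sv_smul _ (Real.exp_pos _)
  have hs2 : singularValues ((!![0, 1; 0, 0] : Matrix (Fin 2) (Fin 2) ℂ) *
        exp (Matrix.diagonal ![(lam : ℂ), (mu : ℂ)])) 0 = Real.exp mu := by
    rw [h2]; exact sv_smul _ (Real.exp_pos _)
  have hlt : Real.exp mu < Real.exp ((lam + mu) / 2) :=
    Real.exp_lt_exp.mpr (by linarith)
  refine ⟨?_, h2, h3, ?_, hs1, hs2, by rw [hs1, hs2]; exact hlt⟩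
  · unfold Matrix.IsHermitian
    ext i j
    fin_cases i <;> fin_cases j <;> simp [Matrix.conjTranspose_apply, Matrix.diagonal]
  · intro hall
    have h1 := hall 1 (by norm_num)
    rw [kyFanSum_one, kyFanSum_one, hs1, hs2] at h1
    linarith
end
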